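/- Let H be a finite-dimensional complex inner product space and let V₁, V₂, W_a, W_b be subspaces of H such that V₁ is orthogonal to V₂ and W_a is orthogonal to W_b. Then ((V₁ ∩ W_a) + (V₂ ∩ W_b)) ∩ ((V₁ ∩ W_b) + (V₂ ∩ W_a)) = {0}. -/

import Mathlib

/-- no-go lemma for the minimal setup: if `V₁ ⟂ V₂` and `W_a ⟂ W_b` are
subspaces of a finite-dimensional complex inner product space, then
`((V₁ ∩ W_a) + (V₂ ∩ W_b)) ∩ ((V₁ ∩ W_b) + (V₂ ∩ W_a)) = {0}`. -/
theorem minimal_setup_no_go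
    {H : Type*} [NormedAddCommGroup H] [InnerProductSpace ℂ H] [FiniteDimensional ℂ H]
    (V1 V2 Wa Wb : Submodule ℂ H)
    (hV : ∀ v ∈ V1, ∀ w ∈ V2, (inner ℂ v w : ℂ) = 0)
    (hW : ∀ v ∈ Wa, ∀ w ∈ Wb, (inner ℂ v w : ℂ) = 0) :
    ((V1 ⊓ Wa) ⊔ (V2 ⊓ Wb)) ⊓ ((V1 ⊓ Wb) ⊔ (V2 ⊓ Wa)) = ⊥ := by
  rw [eq_bot_iff]
  rintro x ⟨hx1, hx2⟩
  obtain ⟨u, ⟨huV, huW⟩, v, ⟨hvV, hvW⟩, rfl⟩ := Submodule.mem_sup.mp hx1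
  obtain ⟨p, ⟨hpV, hpW⟩, q, ⟨hqV, hqW⟩, hpq⟩ := Submodule.mem_sup.mp hx2
  have h : (inner ℂ (u + v) (p + q) : ℂ) = 0 := by
    rw [inner_add_left, inner_add_right, inner_add_right]
    have h1 : (inner ℂ u p : ℂ) = 0 := hW u huW p hpW
    have h2 : (inner ℂ u q : ℂ) = 0 := hV u huV q hqV
    have h3 : (inner ℂ v p : ℂ) = 0 := by
      have := hV p hpV v hvV
      rw [← inner_conj_symm, this, map_zero]
    have h4 : (inner ℂ v q : ℂ) = 0 := by
      have := hW q hqW v hvW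
      rw [← inner_conj_symm, this, map_zero]
    rw [h1, h2, h3, h4]; ring
  simpa [Submodule.mem_bot] using inner_self_eq_zero.mp (hpq ▸ h)
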